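/- Exponential decay from an energy boundedness and a Carleman-type integral estimate: let C > 0 and 𝔭 > 0 be real constants, let ℓ ≥ 2 be an integer, and let e : ℝ → [0, ∞) be a continuous function satisfying e(t2) ≤ C e(t1) for all t1 ≤ t2 and e(t2) + ∫_{t1}^{t2} e(t) dt ≤ e^{C ℓ^𝔭} e(t1) for all t1 ≤ t2. Then for every t0 and every t ≥ t0, e(t) ≤ 10 C exp( e^{−C ℓ^𝔭} (t0 − t) ) e(t0). -/

import Mathlib

noncomputable section

open MeasureTheory Filter Set

/-- Exponential decay from an energy boundedness and a Carleman-type integral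
estimate: if a continuous nonnegative function e satisfies
e(t₂) ≤ C e(t₁) and e(t₂) + ∫_{t₁}^{t₂} e ≤ e^{Cℓ^𝔭} e(t₁) for all t₁ ≤ t₂,
then e(t) ≤ 10 C exp(e^{−Cℓ^𝔭}(t₀ − t)) e(t₀) for all t ≥ t₀. -/
theorem exponential_decay_from_carleman
    (C p : ℝ) (hC : 0 < C) (hp : 0 < p) (ℓ : ℕ) (hℓ : 2 ≤ ℓ)
    (e : ℝ → ℝ) (hcont : Continuous e) (hnonneg : ∀ t, 0 ≤ e t)
    (hbd : ∀ t1 t2 : ℝ, t1 ≤ t2 → e t2 ≤ C * e t1)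
    (hcar : ∀ t1 t2 : ℝ, t1 ≤ t2 →
      e t2 + ∫ t in t1..t2, e t ≤ Real.exp (C * (ℓ : ℝ) ^ p) * e t1) :
    ∀ t0 t : ℝ, t0 ≤ t →
      e t ≤ 10 * C * Real.exp (Real.exp (-(C * (ℓ : ℝ) ^ p)) * (t0 - t)) * e t0 := by
  intro t0 t ht
  set M : ℝ := Real.exp (C * (ℓ : ℝ) ^ p) with hM
  have hMpos : 0 < M := Real.exp_pos _
  have hM1 : 1 ≤ M := Real.one_le_exp (by positivity)
  have hInt : ∀ a b : ℝ, IntervalIntegrable e volume a b := fun a b =>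
    hcont.intervalIntegrable a b
  -- rewrite the target exponent
  have hexp : Real.exp (-(C * (ℓ : ℝ) ^ p)) = M⁻¹ := by
    rw [Real.exp_neg]
  -- Gronwall-type step: for s ≥ t0, ∫ u in s..t, e u ≤ M * e t0 * exp (-(s - t0)/M)
  have key : ∀ s : ℝ, t0 ≤ s →
      (∫ u in s..t, e u) ≤ M * e t0 * Real.exp (-((s - t0) / M)) := by
    intro s hs
    set φ : ℝ → ℝ := fun x => (∫ u in x..t, e u) * Real.exp ((x - t0) / M) with hφ
    have hderiv : ∀ x : ℝ, HasDerivAt φ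
        ((-(e x) + (∫ u in x..t, e u) / M) * Real.exp ((x - t0) / M)) x := by
      intro x
      have h1 : HasDerivAt (fun y => ∫ u in y..t, e u) (-(e x)) x := by
        have h2 : HasDerivAt (fun y => ∫ u in t..y, e u) (e x) x :=
          intervalIntegral.integral_hasDerivAt_right (hInt t x)
            hcont.aestronglyMeasurable.stronglyMeasurableAtFilter
            hcont.continuousAt
        have h3 : (fun y => ∫ u in y..t, e u) = fun y => -(∫ u in t..y, e u) := by
          funext y; rw [intervalIntegral.integral_symm]
        rw [h3]
        exact h2.neg
      have h4 : HasDerivAt (fun x => Real.exp ((x - t0) / M))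
          (Real.exp ((x - t0) / M) * (1 / M)) x := by
        have : HasDerivAt (fun x : ℝ => (x - t0) / M) (1 / M) x := by
          have := ((hasDerivAt_id x).sub_const t0).div_const M
          simpa using this
        exact (Real.hasDerivAt_exp _).comp x this
      have := h1.mul h4
      refine this.congr_deriv ?_
      ring
    have hanti : Antitone φ := by
      apply antitone_of_deriv_nonpos
      · intro x; exact (hderiv x).differentiableAt
      · intro x
        rw [(hderiv x).deriv]
        have hle : (∫ u in x..t, e u) ≤ M * e x := by
          rcases le_or_gt x t with hxt | hxt
          · have := hcar x t hxt
            nlinarith [hnonneg t]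
          · rw [intervalIntegral.integral_symm]
            have : 0 ≤ ∫ u in t..x, e u :=
              intervalIntegral.integral_nonneg hxt.le (fun u _ => hnonneg u)
            nlinarith [hnonneg x, hMpos]
        have h5 : -(e x) + (∫ u in x..t, e u) / M ≤ 0 := by
          have h5' : (∫ u in x..t, e u) / M ≤ e x := by
            rw [div_le_iff₀ hMpos]; linarith
          linarith
        have := Real.exp_pos ((x - t0) / M)
        nlinarith
    have h6 : φ s ≤ φ t0 := hanti hs
    have h7 : φ t0 = ∫ u in t0..t, e u := by
      simp [hφ]
    have h8 : (∫ u in t0..t, e u) ≤ M * e t0 := by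
      have := hcar t0 t ht
      nlinarith [hnonneg t]
    have h9 : φ s ≤ M * e t0 := by rw [h7] at h6; linarith
    have h10 : (0:ℝ) < Real.exp ((s - t0) / M) := Real.exp_pos _
    have : (∫ u in s..t, e u) = φ s * Real.exp (-((s - t0) / M)) := by
      rw [hφ]
      simp only []
      rw [mul_assoc, ← Real.exp_add]
      simp
    rw [this]
    have h11 : 0 < Real.exp (-((s - t0) / M)) := Real.exp_pos _
    nlinarith
  rw [hexp]
  have hexp1 : Real.exp (1:ℝ) < 3 := by
    have := Real.exp_one_lt_d9
    linarith
  -- main case split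
  rcases le_or_gt (t - t0) M with hcase | hcase
  · -- short time: use boundedness
    have h1 : e t ≤ C * e t0 := hbd t0 t ht
    have h2 : (-1 : ℝ) ≤ M⁻¹ * (t0 - t) := by
      rw [neg_le, ← neg_mul]
      calc -M⁻¹ * (t0 - t) = (t - t0) / M := by field_simp; ring
        _ ≤ 1 := by rw [div_le_one hMpos]; linarith
    have h3 : Real.exp (-1 : ℝ) ≤ Real.exp (M⁻¹ * (t0 - t)) := Real.exp_le_exp.2 h2
    have h4 : (1:ℝ)/3 ≤ Real.exp (-1 : ℝ) := by
      rw [Real.exp_neg, (by norm_num : (1:ℝ)/3 = (3:ℝ)⁻¹)]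
      exact inv_anti₀ (Real.exp_pos 1) hexp1.le
    calc e t ≤ C * e t0 := h1
      _ = C * e t0 * 1 := by ring
      _ ≤ C * e t0 * (10 * Real.exp (M⁻¹ * (t0 - t))) := by
          apply mul_le_mul_of_nonneg_left _ (mul_nonneg hC.le (hnonneg t0))
          linarith
      _ = 10 * C * Real.exp (M⁻¹ * (t0 - t)) * e t0 := by ring
  · -- long time: use the Gronwall bound on [t - M, t]
    set s : ℝ := t - M with hsdef
    have hs0 : t0 ≤ s := by simp [hsdef]; linarith
    have hst : s ≤ t := by simp [hsdef]; linarith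
    have hKle : (∫ u in s..t, e u) ≤ M * e t0 * Real.exp (-((s - t0) / M)) :=
      key s hs0
    have hlow : e t * M / C ≤ ∫ u in s..t, e u := by
      have hmono : ∀ u ∈ Icc s t, e t / C ≤ e u := by
        intro u hu
        rw [div_le_iff₀ hC, mul_comm]
        exact hbd u t hu.2
      have h1 : (∫ u in s..t, (e t / C)) ≤ ∫ u in s..t, e u := by
        apply intervalIntegral.integral_mono_on hst
          (intervalIntegrable_const) (hInt s t)
        exact hmono
      have h2 : (∫ u in s..t, (e t / C)) = (t - s) * (e t / C) := by
        simp [smul_eq_mul]; ring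
      have h3 : t - s = M := by simp [hsdef]
      rw [h2, h3] at h1
      calc e t * M / C = M * (e t / C) := by ring
        _ ≤ ∫ u in s..t, e u := h1
    have hexprw : Real.exp (-((s - t0) / M)) =
        Real.exp 1 * Real.exp (M⁻¹ * (t0 - t)) := by
      rw [← Real.exp_add]
      congr 1
      field_simp [hsdef]
      ring
    rw [hexprw] at hKle
    have h5 : e t * M / C ≤ M * e t0 * (Real.exp 1 * Real.exp (M⁻¹ * (t0 - t))) :=
      le_trans hlow hKle
    have h6 : e t ≤ C * e t0 * (Real.exp 1 * Real.exp (M⁻¹ * (t0 - t))) := by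
      rw [div_le_iff₀ hC] at h5
      have := mul_le_mul_of_nonneg_right h5 (le_of_lt (inv_pos.2 hMpos))
      calc e t = e t * M * M⁻¹ := by field_simp
        _ ≤ M * e t0 * (Real.exp 1 * Real.exp (M⁻¹ * (t0 - t))) * C * M⁻¹ := this
        _ = C * e t0 * (Real.exp 1 * Real.exp (M⁻¹ * (t0 - t))) * (M * M⁻¹) := by ring
        _ = C * e t0 * (Real.exp 1 * Real.exp (M⁻¹ * (t0 - t))) := by
            field_simp
    have h7 : 0 < Real.exp (M⁻¹ * (t0 - t)) := Real.exp_pos _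
    calc e t ≤ C * e t0 * (Real.exp 1 * Real.exp (M⁻¹ * (t0 - t))) := h6
      _ ≤ C * e t0 * (10 * Real.exp (M⁻¹ * (t0 - t))) := by
          apply mul_le_mul_of_nonneg_left _ (mul_nonneg hC.le (hnonneg t0))
          nlinarith
      _ = 10 * C * Real.exp (M⁻¹ * (t0 - t)) * e t0 := by ring
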